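/- Let Y be a normed vector space and A = [C]^× a set which is admissible at x̂ ∈ A \ int(A), determined by C. Then T_C(x̂) is nonempty and 0 ∉ T_C(x̂). -/

import Mathlib

open Topology Filter Set

noncomputable section

section Defs

variable {E : Type*} [AddCommGroup E] [Module ℝ E] [TopologicalSpace E]

/-- The canonical map from the topological dual of `E` to the weak-star dual. -/
def toWD (φ : E →L[ℝ] ℝ) : WeakDual ℝ E := φ

/-- The weak-star closed convex hull of a set of continuous linear functionals. -/
def wcch (B : Set (E →L[ℝ] ℝ)) : Set (WeakDual ℝ E) :=
  closure (convexHull ℝ (toWD '' B))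

/-- `f` is Gateaux differentiable at `x` with Gateaux-differential `f'`. -/
def HasGateauxAt (f : E → ℝ) (f' : E →L[ℝ] ℝ) (x : E) : Prop :=
  ∀ v : E, Tendsto (fun t : ℝ => (f (x + t • v) - f x - t * f' v) / t) (𝓝[>] 0) (𝓝 0)

/-- The family `C` is equi-Gateaux differentiable at `x`, with differentials given by `D`. -/
def EquiGateauxAt (C : Set (E → ℝ)) (D : (E → ℝ) → E →L[ℝ] ℝ) (x : E) : Prop :=
  (∀ φ ∈ C, HasGateauxAt φ (D φ) x) ∧
  ∀ v : E, ∀ ε : ℝ, 0 < ε → ∃ δ : ℝ, 0 < δ ∧ ∀ t : ℝ, 0 < t → t < δ →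
    ∀ φ ∈ C, |(φ (x + t • v) - φ x - t * (D φ) v) / t| ≤ ε

/-- The family `C` is equi-lower semicontinuous at `x`. -/
def EquiLscAt (C : Set (E → ℝ)) (x : E) : Prop :=
  ∀ ε : ℝ, 0 < ε → ∃ O ∈ 𝓝 x, ∀ y ∈ O, ∀ φ ∈ C, φ y - φ x > -ε

/-- `[C]^× = {x ∈ E : φ(x) ≥ 0 for all φ ∈ C}`. -/
def polarSet (C : Set (E → ℝ)) : Set E := {x | ∀ φ ∈ C, 0 ≤ φ x}

/-- The multiplier set `T_C(x̂)`. -/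
def multSet (C : Set (E → ℝ)) (D : (E → ℝ) → E →L[ℝ] ℝ) (x : E) : Set (WeakDual ℝ E) :=
  ⋂ n ∈ {n : ℕ | 1 ≤ n}, wcch (D '' {φ | φ ∈ C ∧ φ x ∈ Icc (0:ℝ) (1/(n:ℝ))})

/-- `F` is weak-admissible at `x ∈ F`, determined by `C` (with differentials `D`). -/
def WeakAdmissibleAt (F : Set E) (C : Set (E → ℝ)) (D : (E → ℝ) → E →L[ℝ] ℝ) (x : E) : Prop :=
  x ∈ F ∧ C.Nonempty ∧ F = polarSet C ∧ EquiGateauxAt C D x ∧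
    ({φ | φ ∈ C ∧ φ x ≠ 0} = ∅ ∨ EquiLscAt {φ | φ ∈ C ∧ φ x ≠ 0} x) ∧
    IsCompact (wcch (D '' C))

end Defs

section NormedDefs

variable {Y : Type*} [NormedAddCommGroup Y] [NormedSpace ℝ Y]

/-- `A` is admissible at `x ∈ A`, determined by `C` (with differentials `D`). -/
def AdmissibleAt (A : Set Y) (C : Set (Y → ℝ)) (D : (Y → ℝ) → Y →L[ℝ] ℝ) (x : Y) : Prop :=
  x ∈ A ∧ C.Nonempty ∧ A = polarSet C ∧ EquiGateauxAt C D x ∧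
    (∃ r : NNReal, ∃ ε : ℝ, 0 < ε ∧ ∀ φ ∈ C, LipschitzOnWith r φ (Metric.ball x ε)) ∧
    toWD (0 : Y →L[ℝ] ℝ) ∉ wcch (D '' C)

/-- The recession cone of a set. -/
def recCone (K : Set Y) : Set Y := {v | ∀ l : ℝ, 0 < l → ∀ x ∈ K, x + l • v ∈ K}

/-- The barrier cone of `K`: functionals bounded above on `K`. -/
def barCone (K : Set Y) : Set (Y →L[ℝ] ℝ) := {φ | BddAbove (φ '' K)}

/-- The dual positive cone `A*`. -/
def posDualCone (A : Set Y) : Set (Y →L[ℝ] ℝ) := {φ | ∀ y ∈ A, 0 ≤ φ y}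

end NormedDefs


section AuxLemmas

variable {Y : Type*} [NormedAddCommGroup Y] [NormedSpace ℝ Y]

lemma wcch_mono {E : Type*} [AddCommGroup E] [Module ℝ E] [TopologicalSpace E]
    {B1 B2 : Set (E →L[ℝ] ℝ)} (h : B1 ⊆ B2) : wcch B1 ⊆ wcch B2 :=
  closure_mono (convexHull_mono (Set.image_mono h))

lemma dual_norm_bound {φ : Y → ℝ} {ψ : Y →L[ℝ] ℝ} {xh : Y} {r : NNReal} {ε : ℝ} (hε : 0 < ε)
    (hlip : LipschitzOnWith r φ (Metric.ball xh ε))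
    (hg : HasGateauxAt φ ψ xh) : ‖ψ‖ ≤ r := by
  refine ContinuousLinearMap.opNorm_le_bound ψ r.coe_nonneg (fun v => ?_)
  have hten : Tendsto (fun t : ℝ => (φ (xh + t • v) - φ xh) / t) (𝓝[>] 0) (𝓝 (ψ v)) := by
    have h1 : Tendsto (fun t : ℝ => (φ (xh + t • v) - φ xh - t * ψ v) / t + ψ v)
        (𝓝[>] 0) (𝓝 (0 + ψ v)) := (hg v).add tendsto_const_nhds
    rw [zero_add] at h1
    refine h1.congr' ?_
    filter_upwards [self_mem_nhdsWithin] with t (ht : (0:ℝ) < t)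
    field_simp
    ring
  have hev : ∀ᶠ t in 𝓝[>] (0:ℝ), |(φ (xh + t • v) - φ xh) / t| ≤ (r:ℝ) * ‖v‖ := by
    have hmem : Set.Ioo (0:ℝ) (ε / (‖v‖ + 1)) ∈ 𝓝[>] (0:ℝ) :=
      Ioo_mem_nhdsGT_of_mem ⟨le_refl 0, by positivity⟩
    filter_upwards [hmem] with t ht
    obtain ⟨ht0, htε⟩ := ht
    have hball : xh + t • v ∈ Metric.ball xh ε := by
      rw [Metric.mem_ball, dist_self_add_left, norm_smul, Real.norm_eq_abs, abs_of_pos ht0]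
      calc t * ‖v‖ ≤ t * (‖v‖ + 1) := by nlinarith [norm_nonneg v]
        _ < ε := by
          rw [← lt_div_iff₀ (by positivity)] at *
          exact htε
    have hd := hlip.dist_le_mul _ hball _ (Metric.mem_ball_self hε)
    rw [Real.dist_eq, dist_self_add_left, norm_smul, Real.norm_eq_abs, abs_of_pos ht0] at hd
    rw [abs_div, abs_of_pos ht0, div_le_iff₀ ht0]
    calc |φ (xh + t • v) - φ xh| ≤ (r:ℝ) * (t * ‖v‖) := hd
      _ = (r:ℝ) * ‖v‖ * t := by ring
  exact le_of_tendsto hten.abs hev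

end AuxLemmas

/-- If `A = [C]^×` is admissible at `xh ∈ A \ int(A)`, determined by `C`,
then `T_C(xh)` is nonempty and `0 ∉ T_C(xh)`. -/
theorem multSet_nonempty_and_not_zero
    {Y : Type*} [NormedAddCommGroup Y] [NormedSpace ℝ Y]
    (A : Set Y) (C : Set (Y → ℝ)) (D : (Y → ℝ) → Y →L[ℝ] ℝ) (xh : Y)
    (hadm : AdmissibleAt A C D xh)
    (hx : xh ∈ A \ interior A) :
    (multSet C D xh).Nonempty ∧ toWD (0 : Y →L[ℝ] ℝ) ∉ multSet C D xh := by
  obtain ⟨hxA, hCne, hAC, hEG, ⟨r, ε, hε, hlip⟩, h0⟩ := hadm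
  have hDnorm : ∀ φ ∈ C, ‖D φ‖ ≤ (r:ℝ) :=
    fun φ hφ => dual_norm_bound hε (hlip φ hφ) (hEG.1 φ hφ)
  set K : Set (WeakDual ℝ Y) := WeakDual.toStrongDual ⁻¹' Metric.closedBall 0 r with hKdef
  have hKcomp : IsCompact K := WeakDual.isCompact_closedBall (0 : StrongDual ℝ Y) (r:ℝ)
  have hKclosed : IsClosed K := hKcomp.isClosed
  have hKconv : Convex ℝ K :=
    (convex_closedBall (0 : StrongDual ℝ Y) (r:ℝ)).linear_preimage
      (WeakDual.toStrongDual : WeakDual ℝ Y ≃ₗ[ℝ] StrongDual ℝ Y).toLinearMap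
  have hsub : ∀ B, B ⊆ C → wcch (D '' B) ⊆ K := by
    intro B hB
    refine closure_minimal (convexHull_min ?_ hKconv) hKclosed
    rintro _ ⟨_, ⟨φ, hφ, rfl⟩, rfl⟩
    show WeakDual.toStrongDual (toWD (D φ)) ∈ Metric.closedBall 0 (r:ℝ)
    rw [Metric.mem_closedBall, dist_zero_right]
    exact hDnorm φ (hB hφ)
  set S : ℕ → Set (WeakDual ℝ Y) :=
    fun n => wcch (D '' {φ | φ ∈ C ∧ φ xh ∈ Icc (0:ℝ) (1/(n:ℝ))}) with hSdef
  have hSsub : ∀ n, S n ⊆ K := fun n => hsub _ (fun φ hφ => hφ.1)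
  have hSclosed : ∀ n, IsClosed (S n) := fun n => isClosed_closure
  have hxpol : xh ∈ polarSet C := hAC ▸ hxA
  have hSne : ∀ n : ℕ, 1 ≤ n → ∃ φ, φ ∈ C ∧ φ xh ∈ Icc (0:ℝ) (1/(n:ℝ)) := by
    intro n hn
    have hn' : (1:ℝ) ≤ (n:ℝ) := by exact_mod_cast hn
    have hn0 : (0:ℝ) < (n:ℝ) := by linarith
    set δ : ℝ := min ε (1/((n:ℝ) * ((r:ℝ)+1))) with hδdef
    have hδ0 : 0 < δ := lt_min hε (by positivity)
    have hnotsub : ¬ Metric.ball xh δ ⊆ A := fun h =>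
      hx.2 (mem_interior_iff_mem_nhds.mpr
        (Filter.mem_of_superset (Metric.ball_mem_nhds xh hδ0) h))
    obtain ⟨y, hyb, hyA⟩ := Set.not_subset.mp hnotsub
    have hy' : ∃ φ ∈ C, φ y < 0 := by
      by_contra h; push_neg at h
      exact hyA (hAC ▸ (fun φ hφ => h φ hφ))
    obtain ⟨φ, hφC, hφy⟩ := hy'
    refine ⟨φ, hφC, hxpol φ hφC, ?_⟩
    have hyε : y ∈ Metric.ball xh ε :=
      Metric.mem_ball.mpr (lt_of_lt_of_le (Metric.mem_ball.mp hyb) (min_le_left _ _))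
    have hd := hlip φ hφC |>.dist_le_mul _ (Metric.mem_ball_self hε) _ hyε
    rw [Real.dist_eq] at hd
    have hdist : dist xh y < δ := by rw [dist_comm]; exact Metric.mem_ball.mp hyb
    have hδle : δ ≤ 1/((n:ℝ)*((r:ℝ)+1)) := min_le_right _ _
    have key : (r:ℝ) * δ ≤ 1/(n:ℝ) := by
      have h2 : δ * ((n:ℝ) * ((r:ℝ)+1)) ≤ 1 := (le_div_iff₀ (by positivity)).mp hδle
      rw [le_div_iff₀ hn0]
      nlinarith [hδ0.le, r.coe_nonneg]
    calc φ xh ≤ φ xh - φ y := by linarith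
      _ ≤ |φ xh - φ y| := le_abs_self _
      _ ≤ (r:ℝ) * dist xh y := hd
      _ ≤ (r:ℝ) * δ := by nlinarith [r.coe_nonneg, hdist.le]
      _ ≤ 1/(n:ℝ) := key
  have hSmemne : ∀ n : ℕ, 1 ≤ n → (S n).Nonempty := by
    intro n hn
    obtain ⟨φ, hφC, hφx⟩ := hSne n hn
    exact ⟨toWD (D φ), subset_closure (subset_convexHull ℝ _ ⟨D φ, ⟨φ, ⟨hφC, hφx⟩, rfl⟩, rfl⟩)⟩
  have hmono : ∀ k : ℕ, S (k+1+1) ⊆ S (k+1) := by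
    intro k
    apply wcch_mono
    apply Set.image_mono
    rintro φ ⟨hφC, h0', h1'⟩
    refine ⟨hφC, h0', h1'.trans ?_⟩
    apply one_div_le_one_div_of_le
    · positivity
    · push_cast; linarith
  have hiInter : multSet C D xh = ⋂ k : ℕ, S (k+1) := by
    ext x
    simp only [multSet, Set.mem_iInter, Set.mem_setOf_eq, hSdef]
    constructor
    · intro h k
      exact h (k+1) (Nat.succ_le_succ (Nat.zero_le k))
    · intro h n hn
      obtain ⟨k, rfl⟩ := Nat.exists_eq_add_of_le' hn
      exact h k
  constructor
  · rw [hiInter]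
    exact IsCompact.nonempty_iInter_of_sequence_nonempty_isCompact_isClosed _
      hmono (fun k => hSmemne (k+1) (Nat.succ_le_succ (Nat.zero_le k)))
      (hKcomp.of_isClosed_subset (hSclosed 1) (hSsub 1)) (fun k => hSclosed (k+1))
  · intro hmem
    rw [hiInter] at hmem
    have h1 : toWD (0 : Y →L[ℝ] ℝ) ∈ S 1 := Set.mem_iInter.mp hmem 0
    exact h0 (wcch_mono (Set.image_mono (fun φ hφ => hφ.1)) h1)
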